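/- Let f ∈ C₀(D) and δ > 0. Then for all but finitely many (s,i) ∈ D, there exists (t,j) ∈ (s,i)⁺ such that |f(s,i) − f(t,j)| < δ. -/

import Mathlib

/-- An element of Kurepa's tree `Λ`: an injective function `t : α → ω` with countable
ordinal domain `α` and coinfinite range.  The function is represented as a total function
on ordinals which takes the junk value `0` outside of the domain. -/
structure Lambda : Type 1 where
  toFun : Ordinal.{0} → ℕ
  dom : Ordinal.{0}
  countable : dom.card ≤ Cardinal.aleph0
  inj : ∀ β γ, β < dom → γ < dom → toFun β = toFun γ → β = γ
  coinfinite : {n : ℕ | ∀ β, β < dom → toFun β ≠ n}.Infinite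
  junk : ∀ β, ¬ β < dom → toFun β = 0

/-- The tree order on `Λ`: `s ≼ t` iff `t` extends `s`. -/
def Lambda.le (s t : Lambda) : Prop :=
  s.dom ≤ t.dom ∧ ∀ β, β < s.dom → s.toFun β = t.toFun β

/-- The strict tree order on `Λ`. -/
def Lambda.lt (s t : Lambda) : Prop := Lambda.le s t ∧ s ≠ t

/-- `r ≺ s` for `r ∈ Λ ∪ {0}` (`none` plays the role of the extra least element `0`). -/
def precLt : Option Lambda → Lambda → Prop
  | none, _ => True
  | some r, s => Lambda.lt r s

/-- The interval `(r, t] = {s ∈ Λ : r ≺ s ≼ t}`, with `r ∈ Λ ∪ {0}`. -/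
def lamIoc (r : Option Lambda) (t : Lambda) : Set Lambda :=
  {s | precLt r s ∧ Lambda.le s t}

/-- The position of the minimum of `t` on the ordinal interval `[δ, β)`. -/
noncomputable def minPos (t : Ordinal.{0} → ℕ) (δ β : Ordinal.{0}) : Ordinal.{0} :=
  sInf {ξ | δ ≤ ξ ∧ ξ < β ∧ ∀ η, δ ≤ η → η < β → t ξ ≤ t η}

lemma minPos_lt (t : Ordinal.{0} → ℕ) {δ β : Ordinal.{0}} (h : δ < β) : minPos t δ β < β := by
  have hne : {ξ : Ordinal.{0} | δ ≤ ξ ∧ ξ < β ∧ ∀ η, δ ≤ η → η < β → t ξ ≤ t η}.Nonempty := by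
    have h1 : {n : ℕ | ∃ ξ : Ordinal.{0}, δ ≤ ξ ∧ ξ < β ∧ t ξ = n}.Nonempty :=
      ⟨t δ, δ, le_refl _, h, rfl⟩
    obtain ⟨ξ, hξ1, hξ2, hξ3⟩ := Nat.sInf_mem h1
    refine ⟨ξ, hξ1, hξ2, fun η h1' h2' => ?_⟩
    rw [hξ3]
    exact Nat.sInf_le ⟨η, h1', h2', rfl⟩
  obtain ⟨ξ, hξ⟩ := hne
  calc minPos t δ β ≤ ξ := csInf_le (OrderBot.bddBelow _) hξ
    _ < β := hξ.2.1

/-- The sequence `τ` computed from the starting ordinal `β₀` downwards: `τ` is obtained by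
repeatedly passing from `β` to the position of the minimum of `t` on `[δ, β)`, stopping upon
reaching `δ`.  The resulting finite sequence `(β_k, …, β_1)` is recorded as a list in the
order `[β_k, …, β_1]` (so concatenation of the lists corresponds to `⌢`). -/
noncomputable def tauFrom (δ : Ordinal.{0}) (t : Ordinal.{0} → ℕ) : Ordinal.{0} → List Ordinal.{0} :=
  WellFounded.fix wellFounded_lt
    (fun β IH => if h : δ < β then IH (minPos t δ β) (minPos_lt t h) ++ [minPos t δ β] else [])

/-- The finite sequence `τ(s,t)` of ordinals, for `s ≼ t` in `Λ`. -/
noncomputable def tau (s t : Lambda) : List Ordinal.{0} :=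
  tauFrom s.dom t.toFun t.dom

/-- `ℓ(s,t)`, the length of `τ(s,t)`. -/
noncomputable def ell (s t : Lambda) : ℕ := (tau s t).length

/-- The underlying set of the `Λ`-duplicate: `D = Λ × {1, -1}`. -/
abbrev Dup : Type 1 := Lambda × ℤˣ

/-- The basic open sets `W(r,t,i)` of the `Λ`-duplicate. -/
noncomputable def Wset (r : Option Lambda) (t : Lambda) (i : ℤˣ) : Set Dup :=
  {q | q.1 ∈ lamIoc r t ∧ q.2 = (-1) ^ ell q.1 t * i}

/-- The collection of all basic open sets `W(r,t,i)` with `r ≺ t`. -/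
noncomputable def WBasis : Set (Set Dup) :=
  {S | ∃ (r : Option Lambda) (t : Lambda) (i : ℤˣ), precLt r t ∧ S = Wset r t i}

/-- The topology of the `Λ`-duplicate, generated by the basic sets `W(r,t,i)`. -/
noncomputable instance : TopologicalSpace Dup := TopologicalSpace.generateFrom WBasis

/-- `s⁺`, the set of immediate successors of `s` in `Λ`. -/
def succs (s : Lambda) : Set Lambda :=
  {t | Lambda.lt s t ∧ ∀ u, Lambda.lt s u → Lambda.lt u t → False}

section Aux

open Ordinal

namespace Lambda

lemma ext' {s t : Lambda} (h1 : s.toFun = t.toFun) (h2 : s.dom = t.dom) : s = t := by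
  cases s; cases t
  cases h1; cases h2
  rfl

lemma le_refl' (s : Lambda) : s.le s := ⟨le_rfl, fun _ _ => rfl⟩

lemma le_trans' {s t u : Lambda} (h1 : s.le t) (h2 : t.le u) : s.le u :=
  ⟨h1.1.trans h2.1, fun β hβ => (h1.2 β hβ).trans (h2.2 β (hβ.trans_le h1.1))⟩

lemma eq_of_le_of_dom_le {s t : Lambda} (h : s.le t) (h2 : t.dom ≤ s.dom) : s = t := by
  have hd : s.dom = t.dom := le_antisymm h.1 h2
  refine ext' (funext fun β => ?_) hd
  by_cases hβ : β < s.dom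
  · exact h.2 β hβ
  · rw [s.junk β hβ, t.junk β (by rwa [← hd])]

lemma dom_lt_of_lt {s t : Lambda} (h : s.lt t) : s.dom < t.dom := by
  rcases lt_or_ge s.dom t.dom with h' | h'
  · exact h'
  · exact absurd (eq_of_le_of_dom_le h.1 h') h.2

lemma lt_trans' {s t u : Lambda} (h1 : s.lt t) (h2 : t.lt u) : s.lt u := by
  refine ⟨le_trans' h1.1 h2.1, fun he => ?_⟩
  have hd := (dom_lt_of_lt h1).trans (dom_lt_of_lt h2)
  rw [he] at hd
  exact lt_irrefl _ hd

lemma le_total_of_le {s t u : Lambda} (hs : s.le u) (ht : t.le u) : s.le t ∨ t.le s := by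
  rcases le_total s.dom t.dom with h | h
  · exact Or.inl ⟨h, fun β hβ => (hs.2 β hβ).trans (ht.2 β (hβ.trans_le h)).symm⟩
  · exact Or.inr ⟨h, fun β hβ => (ht.2 β hβ).trans (hs.2 β (hβ.trans_le h)).symm⟩

lemma lt_of_les {s t u : Lambda} (hs : s.le u) (ht : t.le u) (h : s.dom < t.dom) : s.lt t := by
  rcases le_total_of_le hs ht with h' | h'
  · exact ⟨h', fun he => by rw [he] at h; exact lt_irrefl _ h⟩
  · exact absurd h (not_lt.2 h'.1)

/-- Restriction of `t` to the domain `e`. -/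
noncomputable def restr (t : Lambda) (e : Ordinal.{0}) (he : e ≤ t.dom) : Lambda where
  toFun β := if β < e then t.toFun β else 0
  dom := e
  countable := (Ordinal.card_le_card he).trans t.countable
  inj := by
    intro β γ hβ hγ h
    try dsimp only at h
    rw [if_pos hβ, if_pos hγ] at h
    exact t.inj β γ (lt_of_lt_of_le hβ he) (lt_of_lt_of_le hγ he) h
  coinfinite := by
    refine t.coinfinite.mono ?_
    intro n hn β hβ
    try dsimp only
    rw [if_pos hβ]
    exact hn β (lt_of_lt_of_le hβ he)
  junk := by
    intro β hβ
    try dsimp only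
    rw [if_neg hβ]

@[simp] lemma restr_dom (t : Lambda) (e : Ordinal.{0}) (he : e ≤ t.dom) :
    (t.restr e he).dom = e := rfl

lemma restr_le (t : Lambda) (e : Ordinal.{0}) (he : e ≤ t.dom) : (t.restr e he).le t :=
  ⟨he, fun β hβ => if_pos hβ⟩

lemma restr_lt (t : Lambda) {e : Ordinal.{0}} (he : e < t.dom) : (t.restr e he.le).lt t :=
  lt_of_les (restr_le t e he.le) (le_refl' t) he

/-- Extension of `s` by one new value `n`. -/
noncomputable def extN (s : Lambda) (n : ℕ) (hn : ∀ β, β < s.dom → s.toFun β ≠ n) : Lambda where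
  toFun β := if β < s.dom then s.toFun β else if β = s.dom then n else 0
  dom := s.dom + 1
  countable := by
    rw [Ordinal.add_one_eq_succ, Ordinal.card_succ]
    exact Cardinal.add_le_aleph0.2 ⟨s.countable, Cardinal.one_le_aleph0⟩
  inj := by
    intro β γ hβ hγ h
    try dsimp only at h
    rw [Ordinal.add_one_eq_succ, Order.lt_succ_iff] at hβ hγ
    rcases hβ.lt_or_eq with hβ | hβ <;> rcases hγ.lt_or_eq with hγ | hγ
    · rw [if_pos hβ, if_pos hγ] at h; exact s.inj β γ hβ hγ h
    · rw [if_pos hβ, hγ, if_neg (lt_irrefl _), if_pos rfl] at h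
      exact absurd h (hn β hβ)
    · rw [hβ, if_neg (lt_irrefl _), if_pos rfl, if_pos hγ] at h
      exact absurd h.symm (hn γ hγ)
    · rw [hβ, hγ]
  coinfinite := by
    refine (s.coinfinite.diff (Set.finite_singleton n)).mono ?_
    rintro m ⟨hm, hm2⟩ β hβ
    try dsimp only
    rw [Ordinal.add_one_eq_succ, Order.lt_succ_iff] at hβ
    rcases hβ.lt_or_eq with hβ | hβ
    · rw [if_pos hβ]; exact hm β hβ
    · rw [hβ, if_neg (lt_irrefl _), if_pos rfl]
      simpa using fun he => hm2 he.symm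
  junk := by
    intro β hβ
    try dsimp only
    rw [Ordinal.add_one_eq_succ, Order.lt_succ_iff, not_le] at hβ
    rw [if_neg (asymm hβ), if_neg hβ.ne']

@[simp] lemma extN_dom (s : Lambda) (n : ℕ) (hn : ∀ β, β < s.dom → s.toFun β ≠ n) :
    (s.extN n hn).dom = s.dom + 1 := rfl

lemma extN_toFun_dom (s : Lambda) (n : ℕ) (hn : ∀ β, β < s.dom → s.toFun β ≠ n) :
    (s.extN n hn).toFun s.dom = n := by
  show (if s.dom < s.dom then _ else if s.dom = s.dom then n else 0) = n
  rw [if_neg (lt_irrefl _), if_pos rfl]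

lemma dom_lt_extN_dom (s : Lambda) : s.dom < s.dom + 1 := by
  rw [Ordinal.add_one_eq_succ]; exact Order.lt_succ s.dom

lemma extN_le (s : Lambda) (n : ℕ) (hn : ∀ β, β < s.dom → s.toFun β ≠ n) :
    s.le (s.extN n hn) :=
  ⟨(dom_lt_extN_dom s).le, fun β hβ => (if_pos hβ).symm⟩

lemma lt_extN (s : Lambda) (n : ℕ) (hn : ∀ β, β < s.dom → s.toFun β ≠ n) :
    s.lt (s.extN n hn) :=
  lt_of_les (extN_le s n hn) (le_refl' _) (dom_lt_extN_dom s)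

lemma extN_mem_succs (s : Lambda) (n : ℕ) (hn : ∀ β, β < s.dom → s.toFun β ≠ n) :
    s.extN n hn ∈ succs s := by
  refine ⟨lt_extN s n hn, fun u hu1 hu2 => ?_⟩
  have h1 := dom_lt_of_lt hu1
  have h2 := dom_lt_of_lt hu2
  rw [extN_dom, Ordinal.add_one_eq_succ, Order.lt_succ_iff] at h2
  exact absurd h1 (not_lt.2 h2)

/-- The unique immediate successor of `s` lying below `w`, for `s ≺ w`. -/
noncomputable def succToward (s w : Lambda) (h : s.lt w) : Lambda :=
  extN s (w.toFun s.dom) (fun β hβ he => by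
    have hd := dom_lt_of_lt h
    have := w.inj β s.dom (hβ.trans hd) hd (by rw [← h.1.2 β hβ]; exact he)
    exact absurd this (ne_of_lt hβ))

lemma succToward_mem_succs (s w : Lambda) (h : s.lt w) : s.succToward w h ∈ succs s :=
  extN_mem_succs _ _ _

lemma lt_succToward (s w : Lambda) (h : s.lt w) : s.lt (s.succToward w h) :=
  lt_extN _ _ _

lemma succToward_le (s w : Lambda) (h : s.lt w) : (s.succToward w h).le w := by
  have hd := dom_lt_of_lt h
  constructor
  · show s.dom + 1 ≤ w.dom
    rw [Ordinal.add_one_eq_succ]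
    exact Order.succ_le_of_lt hd
  · intro β hβ
    have hβ' : β ≤ s.dom := by
      have : (s.succToward w h).dom = s.dom + 1 := rfl
      rw [this, Ordinal.add_one_eq_succ, Order.lt_succ_iff] at hβ
      exact hβ
    show (if β < s.dom then s.toFun β else if β = s.dom then w.toFun s.dom else 0) = w.toFun β
    rcases hβ'.lt_or_eq with hβ2 | hβ2
    · rw [if_pos hβ2]; exact h.1.2 β hβ2
    · rw [if_neg (by rw [hβ2]; exact lt_irrefl _), if_pos hβ2, hβ2]

end Lambda

end Aux

section Tau

lemma tauFrom_unfold (δ : Ordinal.{0}) (c : Ordinal.{0} → ℕ) (β : Ordinal.{0}) :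
    tauFrom δ c β =
      if h : δ < β then tauFrom δ c (minPos c δ β) ++ [minPos c δ β] else [] := by
  unfold tauFrom
  exact WellFounded.fix_eq _ _ _

lemma tauFrom_nil {δ β : Ordinal.{0}} (c : Ordinal.{0} → ℕ) (h : ¬ δ < β) :
    tauFrom δ c β = [] := by
  rw [tauFrom_unfold, dif_neg h]

lemma minPos_spec (c : Ordinal.{0} → ℕ) {δ β : Ordinal.{0}} (h : δ < β) :
    δ ≤ minPos c δ β ∧ minPos c δ β < β ∧
      ∀ η, δ ≤ η → η < β → c (minPos c δ β) ≤ c η := by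
  have hne : {ξ : Ordinal.{0} | δ ≤ ξ ∧ ξ < β ∧ ∀ η, δ ≤ η → η < β → c ξ ≤ c η}.Nonempty := by
    have h1 : {n : ℕ | ∃ ξ : Ordinal.{0}, δ ≤ ξ ∧ ξ < β ∧ c ξ = n}.Nonempty :=
      ⟨c δ, δ, le_refl _, h, rfl⟩
    obtain ⟨ξ, hξ1, hξ2, hξ3⟩ := Nat.sInf_mem h1
    refine ⟨ξ, hξ1, hξ2, fun η h1' h2' => ?_⟩
    rw [hξ3]
    exact Nat.sInf_le ⟨η, h1', h2', rfl⟩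
  exact csInf_mem hne

lemma tauFrom_congr {c c' : Ordinal.{0} → ℕ} {δ : Ordinal.{0}} :
    ∀ β, (∀ ξ, δ ≤ ξ → ξ < β → c ξ = c' ξ) → tauFrom δ c β = tauFrom δ c' β := by
  intro β
  induction β using Ordinal.induction with
  | h β IH =>
    intro h
    by_cases hδ : δ < β
    · have hmin : minPos c δ β = minPos c' δ β := by
        unfold minPos
        congr 1
        ext ξ
        constructor
        · rintro ⟨h1, h2, h3⟩
          exact ⟨h1, h2, fun η h4 h5 => by
            rw [← h ξ h1 h2, ← h η h4 h5]; exact h3 η h4 h5⟩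
        · rintro ⟨h1, h2, h3⟩
          exact ⟨h1, h2, fun η h4 h5 => by
            rw [h ξ h1 h2, h η h4 h5]; exact h3 η h4 h5⟩
      have hspec := minPos_spec c hδ
      rw [tauFrom_unfold δ c β, tauFrom_unfold δ c' β, dif_pos hδ, dif_pos hδ, ← hmin]
      rw [IH (minPos c δ β) hspec.2.1
        (fun ξ h1 h2 => h ξ h1 (h2.trans hspec.2.1))]
    · rw [tauFrom_nil c hδ, tauFrom_nil c' hδ]

lemma tauFrom_split {c : Ordinal.{0} → ℕ} {γ e : Ordinal.{0}} (hγe : γ ≤ e)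
    (hyp : ∀ ξ, γ ≤ ξ → ξ < e → c e < c ξ) :
    ∀ β, e ≤ β → tauFrom γ c β = tauFrom γ c e ++ tauFrom e c β := by
  intro β
  induction β using Ordinal.induction with
  | h β IH =>
    intro heβ
    by_cases heβ' : e < β
    · have hγβ : γ < β := lt_of_le_of_lt hγe heβ'
      have hset : {ξ : Ordinal.{0} | γ ≤ ξ ∧ ξ < β ∧ ∀ η, γ ≤ η → η < β → c ξ ≤ c η}
          = {ξ : Ordinal.{0} | e ≤ ξ ∧ ξ < β ∧ ∀ η, e ≤ η → η < β → c ξ ≤ c η} := by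
        ext ξ
        constructor
        · rintro ⟨h1, h2, h3⟩
          have he : e ≤ ξ := by
            by_contra hlt
            push_neg at hlt
            exact absurd (h3 e hγe heβ') (not_le.2 (hyp ξ h1 hlt))
          exact ⟨he, h2, fun η h4 h5 => h3 η (hγe.trans h4) h5⟩
        · rintro ⟨h1, h2, h3⟩
          refine ⟨hγe.trans h1, h2, fun η h4 h5 => ?_⟩
          rcases lt_or_ge η e with hη | hη
          · exact le_of_lt (lt_of_le_of_lt (h3 e le_rfl heβ') (hyp η h4 hη))
          · exact h3 η hη h5
      have hmin : minPos c γ β = minPos c e β := by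
        unfold minPos; rw [hset]
      have hspec := minPos_spec c heβ'
      rw [tauFrom_unfold γ c β, dif_pos hγβ, tauFrom_unfold e c β, dif_pos heβ', hmin]
      rw [← hmin] at hspec ⊢
      rw [IH _ hspec.2.1 (hmin ▸ (minPos_spec c heβ').1), List.append_assoc]
    · have hbe : β = e := le_antisymm (not_lt.1 heβ') heβ
      rw [hbe, tauFrom_nil c (lt_irrefl e), List.append_nil]

lemma ell_self (t : Lambda) : ell t t = 0 := by
  show (tauFrom t.dom t.toFun t.dom).length = 0
  rw [tauFrom_nil _ (lt_irrefl _)]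
  rfl

lemma ell_split {v u t : Lambda} (hvu : v.le u) (hut : u.le t)
    (hyp : ∀ ξ, v.dom ≤ ξ → ξ < u.dom → t.toFun u.dom < t.toFun ξ) :
    ell v t = ell v u + ell u t := by
  have h1 : tauFrom v.dom t.toFun t.dom
      = tauFrom v.dom t.toFun u.dom ++ tauFrom u.dom t.toFun t.dom :=
    tauFrom_split hvu.1 hyp t.dom hut.1
  have h2 : tauFrom v.dom t.toFun u.dom = tauFrom v.dom u.toFun u.dom :=
    tauFrom_congr u.dom (fun ξ _ hξ => (hut.2 ξ hξ).symm)
  show (tauFrom v.dom t.toFun t.dom).length = _ + _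
  rw [h1, List.length_append, h2]
  rfl

/-- Core lemma: for every `u ≼ t` there is `r ≺ u` such that `ℓ(v,t) = ℓ(v,u) + ℓ(u,t)`
for every `v ∈ (r, u]`. -/
lemma key_additivity {u t : Lambda} (hut : u.le t) :
    ∃ r : Option Lambda, precLt r u ∧
      ∀ v, precLt r v → v.le u → ell v t = ell v u + ell u t := by
  by_cases hd : t.dom ≤ u.dom
  · have hu : u = t := Lambda.eq_of_le_of_dom_le hut hd
    subst hu
    refine ⟨none, trivial, fun v _ _ => ?_⟩
    rw [ell_self, Nat.add_zero]
  push_neg at hd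
  rcases (Ordinal.zero_or_succ_or_isSuccLimit u.dom).imp_right (Or.imp (fun h => (show ∃ a, u.dom = Order.succ a from h.imp fun _ h => h.symm)) id) with h0 | ⟨a, ha⟩ | hlim
  · refine ⟨none, trivial, fun v _ hvu => ?_⟩
    have hv : v = u := Lambda.eq_of_le_of_dom_le hvu (by rw [h0]; exact zero_le)
    rw [hv, ell_self, Nat.zero_add]
  · have ha' : a < u.dom := by rw [ha]; exact Order.lt_succ a
    refine ⟨some (u.restr a ha'.le), Lambda.restr_lt u ha', fun v hrv hvu => ?_⟩
    have hdom : u.dom ≤ v.dom := by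
      have h2 : a < v.dom := Lambda.dom_lt_of_lt hrv
      rw [ha]; exact Order.succ_le_of_lt h2
    have hv : v = u := Lambda.eq_of_le_of_dom_le hvu hdom
    rw [hv, ell_self, Nat.zero_add]
  · set N := t.toFun u.dom with hN
    set F := {ξ : Ordinal.{0} | ξ < u.dom ∧ t.toFun ξ ≤ N} with hF
    have hFfin : F.Finite := by
      have hinj : Set.InjOn t.toFun F := fun ξ hξ ξ' hξ' he =>
        t.inj ξ ξ' (hξ.1.trans hd) (hξ'.1.trans hd) he
      have him : (t.toFun '' F).Finite :=
        (Set.finite_Iic N).subset (by rintro _ ⟨ξ, hξ, rfl⟩; exact hξ.2)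
      exact Set.Finite.of_finite_image him hinj
    obtain ⟨γ₀, hγ₀, hγ₀'⟩ : ∃ γ₀, γ₀ < u.dom ∧ ∀ ξ ∈ F, ξ < γ₀ := by
      rcases F.eq_empty_or_nonempty with hFe | hFne
      · exact ⟨0, hlim.pos, fun ξ hξ => by rw [hFe] at hξ; exact absurd hξ (Set.notMem_empty ξ)⟩
      · refine ⟨sSup F + 1, ?_, fun ξ hξ => ?_⟩
        · rw [Ordinal.add_one_eq_succ]
          exact hlim.succ_lt (hFne.csSup_mem hFfin).1
        · rw [Ordinal.add_one_eq_succ, Order.lt_succ_iff]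
          exact le_csSup hFfin.bddAbove hξ
    refine ⟨some (u.restr γ₀ hγ₀.le), Lambda.restr_lt u hγ₀, fun v hrv hvu => ?_⟩
    have hγv : γ₀ < v.dom := Lambda.dom_lt_of_lt hrv
    refine ell_split hvu hut (fun ξ h1 h2 => ?_)
    by_contra hc
    push_neg at hc
    have hmem : ξ ∈ F := ⟨h2, hc⟩
    exact absurd (hγ₀' ξ hmem) (not_lt.2 (hγv.le.trans h1))

end Tau

section Basis

/-- Maximum of two optional lower bounds. -/
noncomputable def pickR : Option Lambda → Option Lambda → Option Lambda
  | none, b => b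
  | some a, none => some a
  | some a, some b => if a.dom ≤ b.dom then some b else some a

lemma pickR_spec {u : Lambda} {a b : Option Lambda} (ha : precLt a u) (hb : precLt b u) :
    precLt (pickR a b) u ∧
      ∀ v : Lambda, v.le u → precLt (pickR a b) v → precLt a v ∧ precLt b v := by
  match a, b with
  | none, none => exact ⟨trivial, fun v _ _ => ⟨trivial, trivial⟩⟩
  | none, some b => exact ⟨hb, fun v _ h => ⟨trivial, h⟩⟩
  | some a, none => exact ⟨ha, fun v _ h => ⟨h, trivial⟩⟩
  | some a, some b =>
    by_cases hab : a.dom ≤ b.dom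
    · have hp : pickR (some a) (some b) = some b := by simp [pickR, hab]
      rw [hp]
      refine ⟨hb, fun v hvu h => ?_⟩
      have hbv : b.lt v := h
      exact ⟨Lambda.lt_of_les ha.1 hvu (lt_of_le_of_lt hab (Lambda.dom_lt_of_lt hbv)), hbv⟩
    · have hp : pickR (some a) (some b) = some a := by simp [pickR, hab]
      rw [hp]
      refine ⟨ha, fun v hvu h => ?_⟩
      have hav : a.lt v := h
      exact ⟨hav, Lambda.lt_of_les hb.1 hvu
        (lt_of_le_of_lt (le_of_not_ge hab) (Lambda.dom_lt_of_lt hav))⟩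

lemma mem_Wset_self (q : Dup) : q ∈ Wset none q.1 q.2 :=
  ⟨⟨trivial, Lambda.le_refl' _⟩, by rw [ell_self, pow_zero, one_mul]⟩

lemma Wset_mono {r r' : Option Lambda} {u : Lambda} {i : ℤˣ}
    (h : ∀ v₁ : Lambda, v₁.le u → precLt r v₁ → precLt r' v₁) :
    Wset r u i ⊆ Wset r' u i :=
  fun _ hv => ⟨⟨h _ hv.1.2 hv.1.1, hv.1.2⟩, hv.2⟩

/-- Shrinking lemma: any basic set containing `q` contains a basic set
with top point `q`. -/
lemma Wset_shrink {r₁ : Option Lambda} {t₁ : Lambda} {i₁ : ℤˣ} {q : Dup}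
    (hq : q ∈ Wset r₁ t₁ i₁) :
    ∃ r : Option Lambda, precLt r q.1 ∧ q ∈ Wset r q.1 q.2 ∧
      Wset r q.1 q.2 ⊆ Wset r₁ t₁ i₁ := by
  obtain ⟨⟨hr₁q, hqt₁⟩, hsgn⟩ := hq
  obtain ⟨r', hr', hkey⟩ := key_additivity hqt₁
  obtain ⟨hpu, hpv⟩ := pickR_spec hr₁q hr'
  refine ⟨pickR r₁ r', hpu, ⟨⟨hpu, Lambda.le_refl' _⟩, by rw [ell_self, pow_zero, one_mul]⟩,
    fun v hv => ?_⟩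
  obtain ⟨⟨hrv, hvq⟩, hvsgn⟩ := hv
  obtain ⟨hv1, hv2⟩ := hpv v.1 hvq hrv
  refine ⟨⟨hv1, Lambda.le_trans' hvq hqt₁⟩, ?_⟩
  rw [hvsgn, hsgn, hkey v.1 hv2 hvq, pow_add, mul_assoc]

lemma wbasis : TopologicalSpace.IsTopologicalBasis WBasis := by
  refine ⟨fun W₁ h₁ W₂ h₂ q hq => ?_, ?_, rfl⟩
  · obtain ⟨r₁, t₁, i₁, hrt₁, rfl⟩ := h₁
    obtain ⟨r₂, t₂, i₂, hrt₂, rfl⟩ := h₂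
    obtain ⟨r', hr', hq', hsub'⟩ := Wset_shrink hq.1
    obtain ⟨r'', hr'', hq'', hsub''⟩ := Wset_shrink hq.2
    obtain ⟨hpu, hpv⟩ := pickR_spec hr' hr''
    refine ⟨Wset (pickR r' r'') q.1 q.2, ⟨pickR r' r'', q.1, q.2, hpu, rfl⟩,
      ⟨⟨hpu, Lambda.le_refl' _⟩, by rw [ell_self, pow_zero, one_mul]⟩, ?_⟩
    intro v hv
    exact ⟨hsub' (Wset_mono (fun v₁ h1 h2 => (hpv v₁ h1 h2).1) hv),
      hsub'' (Wset_mono (fun v₁ h1 h2 => (hpv v₁ h1 h2).2) hv)⟩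
  · ext q
    simp only [Set.mem_sUnion, Set.mem_univ, iff_true]
    exact ⟨Wset none q.1 q.2, ⟨none, q.1, q.2, trivial, rfl⟩, mem_Wset_self q⟩

lemma acc_inf_infinite {X : Type*} [TopologicalSpace X] {x : X} {S : Set X}
    (h : AccPt x (Filter.cofinite ⊓ Filter.principal S)) {U : Set X} (hU : U ∈ nhds x) :
    (U ∩ S).Infinite := by
  intro hfin
  have h1 : (U ∩ S)ᶜ ∈ (Filter.cofinite : Filter X) := by
    rw [Filter.mem_cofinite, compl_compl]
    exact hfin
  have h2 : U ∈ nhdsWithin x {x}ᶜ := mem_nhdsWithin_of_mem_nhds hU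
  have h3 : U ∩ ((U ∩ S)ᶜ ∩ S) ∈ nhdsWithin x {x}ᶜ ⊓ (Filter.cofinite ⊓ Filter.principal S) :=
    Filter.inter_mem (Filter.mem_inf_of_left h2)
      (Filter.mem_inf_of_right (Filter.inter_mem (Filter.mem_inf_of_left h1)
        (Filter.mem_inf_of_right (Filter.mem_principal_self S))))
  obtain ⟨y, hyU, hyc, hyS⟩ := h.nonempty_of_mem h3
  exact hyc ⟨hyU, hyS⟩

end Basis

/-- For `f ∈ C₀(D)` and `δ > 0`, for all but finitely many `(s,i) ∈ D` there exists
`(t,j) ∈ (s,i)⁺` with `|f(s,i) - f(t,j)| < δ`. -/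
theorem cofinitely_close_successor (f : ZeroAtInftyContinuousMap Dup ℝ)
    (δ : ℝ) (hδ : 0 < δ) :
    {q : Dup | ¬ ∃ p : Dup, p.1 ∈ succs q.1 ∧ |f q - f p| < δ}.Finite := by
  rw [← Set.not_infinite]
  intro hinf
  obtain ⟨K, hKc, hK⟩ : ∃ K : Set Dup, IsCompact K ∧ ∀ q ∉ K, |f q| < δ / 2 := by
    have h1 := zero_at_infty f
    have h2 := Metric.tendsto_nhds.1 h1 (δ / 2) (by linarith)
    rw [Filter.eventually_iff, Filter.mem_cocompact] at h2
    obtain ⟨K, hKc, hsub⟩ := h2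
    refine ⟨K, hKc, fun q hq => ?_⟩
    have h3 := hsub hq
    simpa [Real.dist_eq] using h3
  have step1 : ∀ q ∈ {q : Dup | ¬ ∃ p : Dup, p.1 ∈ succs q.1 ∧ |f q - f p| < δ},
      ¬ (|f q| < δ / 2) := by
    rintro ⟨s, i⟩ hq hlt
    set e := Set.Infinite.natEmbedding _ s.coinfinite with he
    set g : ℕ → Dup := fun k => (s.extN ((e k : ℕ)) (e k).2, 1) with hg
    by_cases hall : ∀ k : ℕ, g k ∈ K
    · have hginj : Function.Injective g := by
        intro k₁ k₂ h
        have h1 : (g k₁).1.toFun s.dom = (g k₂).1.toFun s.dom := by rw [h]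
        rw [hg] at h1
        simp only at h1
        rw [Lambda.extN_toFun_dom, Lambda.extN_toFun_dom] at h1
        exact e.injective (Subtype.ext h1)
      have hSinf : (Set.range g).Infinite := Set.infinite_range_of_injective hginj
      obtain ⟨x, hxK, hacc⟩ :=
        hSinf.exists_accPt_cofinite_inf_principal_of_subset_isCompact hKc
          (Set.range_subset_iff.2 hall)
      have hWopen : IsOpen (Wset none x.1 x.2) :=
        wbasis.isOpen ⟨none, x.1, x.2, trivial, rfl⟩
      have hinf2 := acc_inf_infinite hacc (hWopen.mem_nhds (mem_Wset_self x))
      obtain ⟨y₁, hy₁, y₂, hy₂, hne⟩ := hinf2.nontrivial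
      obtain ⟨k₁, hk₁⟩ := hy₁.2
      obtain ⟨k₂, hk₂⟩ := hy₂.2
      have hle₁ : y₁.1.le x.1 := hy₁.1.1.2
      have hle₂ : y₂.1.le x.1 := hy₂.1.1.2
      have hd : y₂.1.dom = y₁.1.dom := by rw [← hk₁, ← hk₂]; rfl
      have hfst : y₁.1 = y₂.1 := by
        rcases Lambda.le_total_of_le hle₁ hle₂ with h | h
        · exact Lambda.eq_of_le_of_dom_le h (le_of_eq hd)
        · exact (Lambda.eq_of_le_of_dom_le h (le_of_eq hd.symm)).symm
      have hsnd : y₁.2 = y₂.2 := by rw [← hk₁, ← hk₂]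
      exact hne (Prod.ext hfst hsnd)
    · push_neg at hall
      obtain ⟨k, hk⟩ := hall
      have hfk : |f (g k)| < δ / 2 := hK _ hk
      refine hq ⟨g k, Lambda.extN_mem_succs s _ (e k).2, ?_⟩
      have habs : |f (s, i) - f (g k)| ≤ |f (s, i)| + |f (g k)| := abs_sub _ _
      have h5 : |f (s, i)| < δ / 2 := hlt
      linarith
  have hBK : {q : Dup | ¬ ∃ p : Dup, p.1 ∈ succs q.1 ∧ |f q - f p| < δ} ⊆ K := by
    intro q hq
    by_contra hqK
    exact step1 q hq (hK q hqK)
  obtain ⟨q₀, hq₀K, hacc⟩ :=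
    hinf.exists_accPt_cofinite_inf_principal_of_subset_isCompact hKc hBK
  have hU : {x : Dup | |f x - f q₀| < δ / 2} ∈ nhds q₀ := by
    have hc : ContinuousAt f q₀ := (map_continuous f).continuousAt
    have h1 := hc (Metric.ball_mem_nhds (f q₀) (by linarith : (0:ℝ) < δ/2))
    refine Filter.mem_of_superset h1 ?_
    intro x hx
    simpa [Real.dist_eq] using hx
  obtain ⟨W₁, hW₁B, hq₀W₁, hW₁U⟩ := wbasis.mem_nhds_iff.1 hU
  obtain ⟨r₁, t₁, i₁, hrt₁, rfl⟩ := hW₁B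
  obtain ⟨r, hr, hq₀W, hWsub⟩ := Wset_shrink hq₀W₁
  have hWopen : IsOpen (Wset r q₀.1 q₀.2) := wbasis.isOpen ⟨r, q₀.1, q₀.2, hr, rfl⟩
  have hinf2 := acc_inf_infinite hacc (hWopen.mem_nhds hq₀W)
  obtain ⟨y₁, hy₁, y₂, hy₂, hne⟩ := hinf2.nontrivial
  obtain ⟨q, hqW, hqB, hqne⟩ :
      ∃ q : Dup, q ∈ Wset r q₀.1 q₀.2 ∧
        q ∈ {q : Dup | ¬ ∃ p : Dup, p.1 ∈ succs q.1 ∧ |f q - f p| < δ} ∧ q ≠ q₀ := by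
    rcases eq_or_ne y₁ q₀ with h | h
    · exact ⟨y₂, hy₂.1, hy₂.2, fun h2 => hne (h.trans h2.symm)⟩
    · exact ⟨y₁, hy₁.1, hy₁.2, h⟩
  have hsle : q.1.le q₀.1 := hqW.1.2
  have hsgn : q.2 = (-1) ^ ell q.1 q₀.1 * q₀.2 := hqW.2
  have hslt : q.1.lt q₀.1 := by
    refine ⟨hsle, fun heq => hqne ?_⟩
    have h0 : ell q.1 q₀.1 = 0 := by rw [heq]; exact ell_self _
    refine Prod.ext heq ?_
    rw [hsgn, h0, pow_zero, one_mul]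
  set t' := Lambda.succToward q.1 q₀.1 hslt with ht'
  have hprec : precLt r t' := by
    cases r with
    | none => trivial
    | some r₀ => exact Lambda.lt_trans' hqW.1.1 (Lambda.lt_succToward q.1 q₀.1 hslt)
  have ht'W : ((t', (-1) ^ ell t' q₀.1 * q₀.2) : Dup) ∈ Wset r q₀.1 q₀.2 :=
    ⟨⟨hprec, Lambda.succToward_le q.1 q₀.1 hslt⟩, rfl⟩
  have h1 : |f q - f q₀| < δ / 2 := hW₁U (hWsub hqW)
  have h2 : |f (t', (-1) ^ ell t' q₀.1 * q₀.2) - f q₀| < δ / 2 := hW₁U (hWsub ht'W)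
  refine hqB ⟨(t', (-1) ^ ell t' q₀.1 * q₀.2), Lambda.succToward_mem_succs q.1 q₀.1 hslt, ?_⟩
  have h3 := abs_sub_le (f q) (f q₀) (f (t', (-1) ^ ell t' q₀.1 * q₀.2))
  have h4 : |f q₀ - f (t', (-1) ^ ell t' q₀.1 * q₀.2)|
      = |f (t', (-1) ^ ell t' q₀.1 * q₀.2) - f q₀| := abs_sub_comm _ _
  linarith
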